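/- For all integers n ≥ 1 and k with n(1+ln(1-a)) + 1 < k ≤ n where a ∈ [0,1), setting α_k = 1 - e^{(k-1)/n - 1} and α_{k+1} = 1 - e^{k/n - 1}, we have (1 - α_k)/n - α_k + α_{k+1} ≥ -1/n². -/

import Mathlib

theorem stmt_14 (a : ℝ) (ha : a ∈ Set.Ico (0:ℝ) 1) (n k : ℕ) (hn : 1 ≤ n)
    (hk1 : (n : ℝ) * (1 + Real.log (1 - a)) + 1 < k) (hk2 : k ≤ n) :
    (1 - (1 - Real.exp ((k - 1 : ℝ)/n - 1))) / n
      - (1 - Real.exp ((k - 1 : ℝ)/n - 1))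
      + (1 - Real.exp ((k : ℝ)/n - 1))
    ≥ -1 / n ^ 2 := by
  have hn0 : (0:ℝ) < n := by exact_mod_cast hn
  set x : ℝ := 1 / n with hx
  have hx0 : 0 ≤ x := by positivity
  have hx1 : x ≤ 1 := by
    rw [hx, div_le_one hn0]; exact_mod_cast hn
  -- exp x ≤ 1 + x + x^2
  have hexp : Real.exp x ≤ 1 + x + x ^ 2 := by
    have h := Real.exp_bound' hx0 hx1 (n := 2) (by norm_num)
    simp [Finset.sum_range_succ, Nat.factorial] at h
    nlinarith [sq_nonneg x]
  set e := Real.exp ((k - 1 : ℝ)/n - 1) with he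
  have he1 : e ≤ 1 := by
    rw [he, Real.exp_le_one_iff]
    have : (k : ℝ) - 1 ≤ n := by
      have : (k:ℝ) ≤ n := by exact_mod_cast hk2
      linarith
    have := div_le_one_of_le₀ this hn0.le
    linarith
  have he0 : 0 < e := Real.exp_pos _
  have hsplit : Real.exp ((k : ℝ)/n - 1) = e * Real.exp x := by
    rw [he, hx, ← Real.exp_add]
    ring_nf
  rw [hsplit]
  have key : e / n + e - e * Real.exp x ≥ -(1 / n ^ 2) := by
    have h1 : e * Real.exp x ≤ e * (1 + x + x ^ 2) :=
      mul_le_mul_of_nonneg_left hexp he0.le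
    have hxn : x = 1 / n := hx
    have : e * x ^ 2 ≤ 1 / (n:ℝ) ^ 2 := by
      calc e * x ^ 2 ≤ 1 * x ^ 2 := mul_le_mul_of_nonneg_right he1 (sq_nonneg x)
        _ = 1 / (n:ℝ) ^ 2 := by rw [hxn]; field_simp
    have hex : e * x = e / n := by rw [hxn]; ring
    nlinarith
  have : (-1 : ℝ) / n ^ 2 = -(1 / (n:ℝ) ^ 2) := by ring
  have h2 : (1 - (1 - e)) / (n:ℝ) = e / n := by ring
  linarith [key]
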